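/- Fix n ≥ 1, m ≥ 1, and a probability vector (p_1,…,p_{2m}), and perform a biased m-shelf shuffle of n cards in which the n cards are placed into the 2m piles independently, card going into pile k with probability p_k (so the pile counts are multinomial with parameters (n, p_1,…,p_{2m})). Let d_{n,m} be the number of descents of the resulting permutation. Then there exists, on the same probability space, a random variable B_{n,m} with the Binomial(n, Σ_{k=1}^m p_{2k}) distribution such that |d_{n,m} − B_{n,m}| ≤ 4m − 1 almost surely. -/

import Mathlib

open MeasureTheory ProbabilityTheory Finset Filter

/-- The uniform probability measure on a finite type. -/
noncomputable def uniformM (α : Type*) [Fintype α] [MeasurableSpace α] : Measure α :=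
  ((Fintype.card α : ENNReal))⁻¹ • Measure.count

/-- The pile label (in `{1, …, 2m}`) of card `i` under the pile assignment `w`
(pile indices in `Fin (2*m)` are 0-based, so pile `k` carries label `k + 1`).
Under the uniform measure on words, `fun w => Xval w i` are i.i.d. uniform on `{1, …, 2m}`. -/
def Xval {m n : ℕ} (w : Fin n → Fin (2*m)) (i : Fin n) : ℕ := (w i : ℕ) + 1

/-- Sorting key of card `i` in an `m`-shelf shuffle with pile assignment `w`:
cards are ordered first by pile label; within an odd-labeled pile they keep their
increasing order, and within an even-labeled pile their order is reversed. -/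
noncomputable def shelfKey {m n : ℕ} (w : Fin n → Fin (2*m)) (i : Fin n) :
    Lex (Fin (2*m) × ℤ) :=
  toLex (w i, if Even (Xval w i) then -(i : ℤ) else (i : ℤ))

/-- The permutation of `{1, …, n}` (0-based: of `Fin n`) produced by an `m`-shelf shuffle
with pile assignment `w`: position `p` of the shuffled deck holds card `shelfPerm w p`. -/
noncomputable def shelfPerm {m n : ℕ} (w : Fin n → Fin (2*m)) : Equiv.Perm (Fin n) :=
  Tuple.sort (shelfKey w)

/-- The number of inversions of a permutation: pairs `i < j` with `π i > π j`. -/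
def invCount {n : ℕ} (π : Equiv.Perm (Fin n)) : ℕ :=
  ((Finset.univ : Finset (Fin n × Fin n)).filter
    (fun p => p.1 < p.2 ∧ π p.2 < π p.1)).card

/-- `I_{n,m}`: the number of inversions after an `m`-shelf shuffle of `n` cards,
as a random variable on the space of pile-assignment words. -/
noncomputable def shelfInv (m n : ℕ) (w : Fin n → Fin (2*m)) : ℕ := invCount (shelfPerm w)

/-- The number of descents of a permutation: indices `i` with `π i > π (i+1)`. -/
def desCount {n : ℕ} (π : Equiv.Perm (Fin n)) : ℕ :=
  ((Finset.univ : Finset (Fin n × Fin n)).filter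
    (fun p => (p.1 : ℕ) + 1 = (p.2 : ℕ) ∧ π p.2 < π p.1)).card

/-- `d_{n,m}`: the number of descents after an `m`-shelf shuffle of `n` cards,
as a random variable on the space of pile-assignment words. -/
noncomputable def shelfDes (m n : ℕ) (w : Fin n → Fin (2*m)) : ℕ := desCount (shelfPerm w)

/-- The law of a single card's pile under a biased shelf shuffle: pile `k` (0-based
index, label `k+1`) is chosen with probability `p k`. -/
noncomputable def biasedPile (m : ℕ) (p : Fin (2*m) → ℝ) : Measure (Fin (2*m)) :=
  Measure.sum fun k => (ENNReal.ofReal (p k)) • Measure.dirac k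

/-- The law of the pile-assignment word of a biased `m`-shelf shuffle of `n` cards:
the `n` cards are placed into the `2m` piles independently, each according to `p`. -/
noncomputable def biasedWord (m n : ℕ) (p : Fin (2*m) → ℝ) :
    Measure (Fin n → Fin (2*m)) :=
  Measure.pi fun _ : Fin n => biasedPile m p

lemma biasedPile_singleton (m : ℕ) (p : Fin (2*m) → ℝ) (x : Fin (2*m)) :
    biasedPile m p {x} = ENNReal.ofReal (p x) := by
  rw [biasedPile, Measure.sum_apply _ (measurableSet_singleton x), tsum_fintype]
  have : ∀ k : Fin (2*m), (ENNReal.ofReal (p k) • Measure.dirac k) {x}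
      = if k = x then ENNReal.ofReal (p k) else 0 := by
    intro k
    rw [Measure.smul_apply, Measure.dirac_apply]
    by_cases hk : k = x
    · simp [hk, Set.indicator_of_mem]
    · have : k ∉ ({x} : Set (Fin (2*m))) := by simp [hk]
      simp [hk, Set.indicator_of_notMem this]
  rw [Finset.sum_congr rfl (fun k _ => this k), Finset.sum_ite_eq' univ x]
  simp

instance biasedPile_finite (m : ℕ) (p : Fin (2*m) → ℝ) : IsFiniteMeasure (biasedPile m p) := by
  constructor
  rw [biasedPile, Measure.sum_apply _ MeasurableSet.univ, tsum_fintype]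
  refine ENNReal.sum_lt_top.mpr (fun k _ => ?_)
  rw [Measure.smul_apply]
  exact ENNReal.mul_lt_top ENNReal.ofReal_lt_top (by simp)

lemma biasedWord_singleton (m n : ℕ) (p : Fin (2*m) → ℝ) (w0 : Fin n → Fin (2*m)) :
    biasedWord m n p {w0} = ∏ i, ENNReal.ofReal (p (w0 i)) := by
  rw [biasedWord, ← Set.univ_pi_singleton w0, Measure.pi_pi]
  exact Finset.prod_congr rfl (fun i _ => biasedPile_singleton m p (w0 i))

lemma biasedWord_finset (m n : ℕ) (p : Fin (2*m) → ℝ) (F : Finset (Fin n → Fin (2*m))) :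
    biasedWord m n p ↑F = ∑ w ∈ F, ∏ i, ENNReal.ofReal (p (w i)) := by
  have h := MeasureTheory.sum_measure_preimage_singleton (μ := biasedWord m n p) F
    (f := id) (fun y _ => measurableSet_singleton y)
  simp only [Set.preimage_id] at h
  rw [← h]
  exact Finset.sum_congr rfl (fun w _ => by
    simpa using biasedWord_singleton m n p w)

lemma biased_binomial (n m k : ℕ) (p : Fin (2*m) → ℝ) (hp : ∀ k, 0 ≤ p k)
    (hsum : ∑ j, p j = 1) :
    biasedWord m n p {w | (univ.filter (fun i : Fin n => Even (Xval w i))).card = k}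
      = (n.choose k : ENNReal) * ENNReal.ofReal
          ((∑ j ∈ univ.filter (fun j : Fin (2*m) => Even ((j : ℕ) + 1)), p j)^k
            * (1 - ∑ j ∈ univ.filter (fun j : Fin (2*m) => Even ((j : ℕ) + 1)), p j)^(n - k)) := by
  classical
  set Ev : Finset (Fin (2*m)) := univ.filter (fun j => Even ((j : ℕ) + 1)) with hEv
  set Od : Finset (Fin (2*m)) := univ.filter (fun j => ¬ Even ((j : ℕ) + 1)) with hOd
  set q : ℝ := ∑ j ∈ Ev, p j with hqdef
  have hq0 : 0 ≤ q := Finset.sum_nonneg (fun j _ => hp j)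
  have hodsum : ∑ j ∈ Od, p j = 1 - q := by
    have h := Finset.sum_filter_add_sum_filter_not univ (fun j : Fin (2*m) => Even ((j : ℕ) + 1)) p
    rw [hsum] at h
    rw [hqdef, hOd, hEv]
    linarith [h]
  have h1q : 0 ≤ 1 - q := hodsum ▸ Finset.sum_nonneg (fun j _ => hp j)
  set Q : ENNReal := ∑ j ∈ Ev, ENNReal.ofReal (p j) with hQdef
  set R : ENNReal := ∑ j ∈ Od, ENNReal.ofReal (p j) with hRdef
  have hQ : Q = ENNReal.ofReal q := (ENNReal.ofReal_sum_of_nonneg (fun j _ => hp j)).symm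
  have hR : R = ENNReal.ofReal (1 - q) := by
    rw [← hodsum]; exact (ENNReal.ofReal_sum_of_nonneg (fun j _ => hp j)).symm
  set F : Finset (Fin n → Fin (2*m)) := univ.filter
    (fun w => (univ.filter (fun i : Fin n => Even (Xval w i))).card = k) with hF
  have hset : {w : Fin n → Fin (2*m) |
      (univ.filter (fun i : Fin n => Even (Xval w i))).card = k} = ↑F := by
    ext w; simp [hF]
  rw [hset, biasedWord_finset]
  have hpart : F = (powersetCard k (univ : Finset (Fin n))).biUnion
      (fun S => univ.filter (fun w : Fin n → Fin (2*m) =>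
        univ.filter (fun i => Even (Xval w i)) = S)) := by
    ext w
    simp only [hF, mem_filter, mem_univ, true_and, mem_biUnion, mem_powersetCard_univ]
    constructor
    · intro h; exact ⟨_, h, rfl⟩
    · rintro ⟨S, hS, rfl⟩; exact hS
  have hdisj : ∀ S ∈ powersetCard k (univ : Finset (Fin n)),
      ∀ T ∈ powersetCard k (univ : Finset (Fin n)), S ≠ T →
      Disjoint (univ.filter (fun w : Fin n → Fin (2*m) =>
          univ.filter (fun i => Even (Xval w i)) = S))
        (univ.filter (fun w : Fin n → Fin (2*m) =>
          univ.filter (fun i => Even (Xval w i)) = T)) := by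
    intro S _ T _ hST
    rw [Finset.disjoint_left]
    intro w hwS hwT
    simp only [mem_filter, mem_univ, true_and] at hwS hwT
    exact hST (hwS ▸ hwT)
  rw [hpart, Finset.sum_biUnion hdisj]
  have hinner : ∀ S ∈ powersetCard k (univ : Finset (Fin n)),
      ∑ w ∈ univ.filter (fun w : Fin n → Fin (2*m) =>
          univ.filter (fun i => Even (Xval w i)) = S),
        ∏ i, ENNReal.ofReal (p (w i)) = Q ^ k * R ^ (n - k) := by
    intro S hS
    have hScard : S.card = k := (mem_powersetCard_univ).mp hS
    have hfeq : univ.filter (fun w : Fin n → Fin (2*m) =>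
        univ.filter (fun i => Even (Xval w i)) = S)
        = Fintype.piFinset (fun i => if i ∈ S then Ev else Od) := by
      ext w
      simp only [mem_filter, mem_univ, true_and, Fintype.mem_piFinset]
      rw [Finset.ext_iff]
      simp only [mem_filter, mem_univ, true_and]
      constructor
      · intro h i
        have hXv : Even (Xval w i) ↔ w i ∈ Ev := by simp [hEv, Xval]
        by_cases hi : i ∈ S
        · rw [if_pos hi]; exact hXv.mp ((h i).mpr hi)
        · rw [if_neg hi]
          simp only [hOd, mem_filter, mem_univ, true_and]
          intro hcon
          exact hi ((h i).mp (by simpa [Xval] using hcon))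
      · intro h i
        have := h i
        by_cases hi : i ∈ S
        · rw [if_pos hi] at this
          simp only [hEv, mem_filter, mem_univ, true_and] at this
          constructor
          · intro _; exact hi
          · intro _; simpa [Xval] using this
        · rw [if_neg hi] at this
          simp only [hOd, mem_filter, mem_univ, true_and] at this
          constructor
          · intro hcon; exact absurd (by simpa [Xval] using hcon) this
          · intro hcon; exact absurd hcon hi
    have key := Finset.prod_univ_sum (t := fun i : Fin n => if i ∈ S then Ev else Od)
      (f := fun _ j => ENNReal.ofReal (p j))
    rw [hfeq, ← key]
    have hcongr : ∀ i : Fin n, (∑ j ∈ (if i ∈ S then Ev else Od), ENNReal.ofReal (p j))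
        = if i ∈ S then Q else R := by
      intro i
      by_cases hi : i ∈ S <;> simp [hi, hQdef, hRdef]
    rw [Finset.prod_congr rfl (fun i _ => hcongr i), Finset.prod_ite, Finset.prod_const,
      Finset.prod_const, Finset.filter_univ_mem]
    congr 1
    · rw [hScard]
    · congr 1
      have : univ.filter (fun i => ¬ i ∈ S) = Sᶜ := by
        ext i; simp
      rw [this, Finset.card_compl, Fintype.card_fin, hScard]
  rw [Finset.sum_congr rfl hinner, Finset.sum_const, Finset.card_powersetCard,
    Finset.card_univ, Fintype.card_fin, nsmul_eq_mul]
  congr 1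
  rw [hQ, hR, ENNReal.ofReal_mul (pow_nonneg hq0 k), ENNReal.ofReal_pow hq0,
    ENNReal.ofReal_pow h1q]

lemma shelfKey_injective {m n : ℕ} (w : Fin n → Fin (2*m)) :
    Function.Injective (shelfKey w) := by
  intro i j h
  unfold shelfKey at h
  have h' : (w i, if Even (Xval w i) then -(i : ℤ) else (i : ℤ))
      = (w j, if Even (Xval w j) then -(j : ℤ) else (j : ℤ)) := toLex.injective h
  have h1 : w i = w j := congrArg Prod.fst h'
  have h2 := congrArg Prod.snd h'
  simp only at h2
  have hpar : Even (Xval w i) ↔ Even (Xval w j) := by unfold Xval; rw [h1]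
  by_cases he : Even (Xval w i)
  · rw [if_pos he, if_pos (hpar.mp he)] at h2
    have : (i : ℤ) = (j : ℤ) := by omega
    exact Fin.ext (by exact_mod_cast this)
  · rw [if_neg he, if_neg (fun hh => he (hpar.mpr hh))] at h2
    exact Fin.ext (by exact_mod_cast h2)

lemma des_bound (n m : ℕ) (hm : 1 ≤ m) (w : Fin n → Fin (2*m)) :
    |(shelfDes m n w : ℤ) - (((univ.filter (fun i : Fin n => Even (Xval w i))).card : ℤ))|
      ≤ 4 * (m : ℤ) - 1 := by
  set σ : Equiv.Perm (Fin n) := shelfPerm w with hσ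
  set g : Fin n → Fin (2*m) := fun pos => w (σ pos) with hgdef
  have hsm : StrictMono (shelfKey w ∘ σ) :=
    (Tuple.monotone_sort (shelfKey w)).strictMono_of_injective
      ((shelfKey_injective w).comp σ.injective)
  have hg : Monotone g := by
    intro a b hab
    rcases eq_or_lt_of_le hab with rfl | hlt
    · exact le_refl _
    · have := hsm hlt
      have h2 : toLex (g a, if Even (Xval w (σ a)) then -((σ a : Fin n) : ℤ) else ((σ a : Fin n) : ℤ))
          < toLex (g b, if Even (Xval w (σ b)) then -((σ b : Fin n) : ℤ) else ((σ b : Fin n) : ℤ)) := this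
      rw [Prod.Lex.lt_iff] at h2
      rcases h2 with h2 | ⟨h2, _⟩
      · exact le_of_lt h2
      · exact le_of_eq h2
  have hXg : ∀ pos : Fin n, Xval w (σ pos) = (g pos : ℕ) + 1 := fun pos => rfl
  have hclass : ∀ p1 p2 : Fin n, p1 < p2 → g p1 = g p2 →
      (σ p2 < σ p1 ↔ Even ((g p1 : ℕ) + 1)) := by
    intro p1 p2 hlt heq
    have h2 : toLex (g p1, if Even (Xval w (σ p1)) then -((σ p1 : Fin n) : ℤ) else ((σ p1 : Fin n) : ℤ))
        < toLex (g p2, if Even (Xval w (σ p2)) then -((σ p2 : Fin n) : ℤ) else ((σ p2 : Fin n) : ℤ)) :=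
      hsm hlt
    rw [Prod.Lex.lt_iff] at h2
    rcases h2 with h2 | ⟨_, h2⟩
    · rw [heq] at h2; exact absurd h2 (lt_irrefl _)
    · simp only [hXg, heq, ofLex_toLex] at h2 ⊢
      by_cases he : Even ((g p2 : ℕ) + 1)
      · rw [if_pos he, if_pos he] at h2
        constructor
        · intro _; exact he
        · intro _
          have : ((σ p2 : Fin n) : ℤ) < ((σ p1 : Fin n) : ℤ) := by omega
          exact_mod_cast this
      · rw [if_neg he, if_neg he] at h2
        constructor
        · intro hcon
          have : ((σ p2 : Fin n) : ℤ) < ((σ p1 : Fin n) : ℤ) := by exact_mod_cast hcon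
          omega
        · intro hcon; exact absurd hcon he
  -- finsets
  set D : Finset (Fin n × Fin n) := univ.filter
    (fun p => (p.1 : ℕ) + 1 = (p.2 : ℕ) ∧ σ p.2 < σ p.1) with hDdef
  set SE : Finset (Fin n × Fin n) := univ.filter
    (fun p => (p.1 : ℕ) + 1 = (p.2 : ℕ) ∧ g p.1 = g p.2 ∧ Even ((g p.1 : ℕ) + 1)) with hSEdef
  set Bd : Finset (Fin n × Fin n) := univ.filter
    (fun p => (p.1 : ℕ) + 1 = (p.2 : ℕ) ∧ g p.1 < g p.2) with hBddef
  set Bpos : Finset (Fin n) := univ.filter (fun pos => Even ((g pos : ℕ) + 1)) with hBposdef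
  have hlt_of_adj : ∀ p : Fin n × Fin n, (p.1 : ℕ) + 1 = (p.2 : ℕ) → p.1 < p.2 := by
    intro p h; exact Fin.lt_def.mpr (by omega)
  have hdes : shelfDes m n w = D.card := rfl
  have hBcard : (univ.filter (fun i : Fin n => Even (Xval w i))).card = Bpos.card := by
    apply Finset.card_bij' (i := fun i _ => σ.symm i) (j := fun pos _ => σ pos)
    · intro a ha
      simp only [hBposdef, mem_filter, mem_univ, true_and] at ha ⊢
      show Even (Xval w (σ (σ.symm a)))
      rwa [Equiv.apply_symm_apply]
    · intro a ha
      simp only [hBposdef, mem_filter, mem_univ, true_and] at ha ⊢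
      exact ha
    · intro a _; exact σ.apply_symm_apply a
    · intro a _; exact σ.symm_apply_apply a
  -- SE ⊆ D
  have hSED : SE ⊆ D := by
    intro p hp
    simp only [hSEdef, hDdef, mem_filter, mem_univ, true_and] at hp ⊢
    obtain ⟨hadj, heq, hev⟩ := hp
    exact ⟨hadj, (hclass p.1 p.2 (hlt_of_adj p hadj) heq).mpr hev⟩
  -- D ⊆ SE ∪ Bd
  have hDsub : D ⊆ SE ∪ Bd := by
    intro p hp
    simp only [hDdef, hSEdef, hBddef, mem_union, mem_filter, mem_univ, true_and] at hp ⊢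
    obtain ⟨hadj, hdesc⟩ := hp
    rcases lt_or_eq_of_le (hg (le_of_lt (hlt_of_adj p hadj))) with hlt | heq
    · exact Or.inr ⟨hadj, hlt⟩
    · exact Or.inl ⟨hadj, heq, (hclass p.1 p.2 (hlt_of_adj p hadj) heq).mp hdesc⟩
  have hDle : D.card ≤ SE.card + Bd.card :=
    le_trans (Finset.card_le_card hDsub) (Finset.card_union_le _ _)
  -- SE.card ≤ Bpos.card
  have hSEle : SE.card ≤ Bpos.card := by
    apply Finset.card_le_card_of_injOn (fun p => p.2)
    · intro p hp
      simp only [Finset.mem_coe, hSEdef, mem_filter, mem_univ, true_and] at hp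
      simp only [Finset.mem_coe, hBposdef, mem_filter, mem_univ, true_and]
      obtain ⟨_, heq, hev⟩ := hp
      rwa [heq] at hev
    · intro p hp q hq hpq
      simp only [hSEdef, coe_filter, Set.mem_setOf_eq] at hp hq
      have h2 : (p.2 : ℕ) = (q.2 : ℕ) := congrArg Fin.val hpq
      have hc1 := hp.2.1
      have hc2 := hq.2.1
      have h1 : (p.1 : ℕ) = (q.1 : ℕ) := by omega
      exact Prod.ext (Fin.ext h1) hpq
  -- Bd.card ≤ 2m - 1
  have hBdle : Bd.card + 1 ≤ 2 * m := by
    have h2m : 0 < 2 * m := by omega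
    set z : Fin (2*m) := ⟨0, h2m⟩ with hzdef
    have hmem : z ∈ (univ : Finset (Fin (2*m))) := mem_univ _
    have hcard : ((univ : Finset (Fin (2*m))).erase z).card = 2 * m - 1 := by
      rw [Finset.card_erase_of_mem hmem, Finset.card_univ, Fintype.card_fin]
    have hle : Bd.card ≤ ((univ : Finset (Fin (2*m))).erase z).card := by
      apply Finset.card_le_card_of_injOn (fun p => g p.2)
      · intro p hp
        simp only [Finset.mem_coe, hBddef, mem_filter, mem_univ, true_and] at hp
        apply Finset.mem_erase.mpr
        refine ⟨?_, mem_univ _⟩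
        intro (hzero : g p.2 = z)
        have hlt := hp.2
        rw [hzero] at hlt
        have := Fin.lt_def.mp hlt
        simp [hzdef] at this
      · intro p hp q hq hpq
        simp only [hBddef, coe_filter, Set.mem_setOf_eq] at hp hq
        obtain ⟨_, hpa, hpl⟩ := hp
        obtain ⟨_, hqa, hql⟩ := hq
        by_contra hne
        have hne2 : (p.2 : ℕ) ≠ (q.2 : ℕ) := by
          intro h2
          have h1 : (p.1 : ℕ) = (q.1 : ℕ) := by omega
          exact hne (Prod.ext (Fin.ext h1) (Fin.ext h2))
        rcases Nat.lt_or_ge (p.2 : ℕ) (q.2 : ℕ) with hlt | hge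
        · have hle' : p.2 ≤ q.1 := Fin.le_def.mpr (by omega)
          have : g p.2 ≤ g q.1 := hg hle'
          have hx : g p.2 < g q.2 := lt_of_le_of_lt this hql
          have hpq2 : g p.2 = g q.2 := hpq
          rw [hpq2] at hx
          exact absurd hx (lt_irrefl _)
        · have hlt' : (q.2 : ℕ) < (p.2 : ℕ) := by omega
          have hle' : q.2 ≤ p.1 := Fin.le_def.mpr (by omega)
          have : g q.2 ≤ g p.1 := hg hle'
          have hx : g q.2 < g p.2 := lt_of_le_of_lt this hpl
          have hpq2 : g p.2 = g q.2 := hpq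
          rw [hpq2] at hx
          exact absurd hx (lt_irrefl _)
    omega
  -- Bpos.card ≤ SE.card + m
  have hEvcard : (univ.filter (fun j : Fin (2*m) => Even ((j:ℕ)+1))).card = m := by
    have h := Finset.card_bij'
      (i := fun (i : Fin m) (_ : i ∈ (univ : Finset (Fin m))) => ((⟨2*(i:ℕ)+1, by omega⟩ : Fin (2*m))))
      (j := fun (j : Fin (2*m)) (hj : j ∈ univ.filter (fun j : Fin (2*m) => Even ((j:ℕ)+1))) =>
        ((⟨(j:ℕ)/2, by simp only [mem_filter, Nat.even_iff] at hj; omega⟩ : Fin m)))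
      ?_ ?_ ?_ ?_
    · simpa using h.symm
    · intro a ha; simp [mem_filter, Nat.even_iff]; omega
    · intro a ha; simp
    · intro a ha; ext; simp; omega
    · intro a ha; simp only [mem_filter, Nat.even_iff] at ha; ext; simp; omega
  have hpred : ∀ pos : Fin n, (pos.val - 1) < n :=
    fun pos => lt_of_le_of_lt (Nat.sub_le _ _) pos.isLt
  set pred : Fin n → Fin n := fun pos => ⟨pos.val - 1, hpred pos⟩ with hpreddef
  set Bpos1 : Finset (Fin n) := Bpos.filter (fun pos => 0 < (pos : ℕ) ∧ g (pred pos) = g pos)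
    with hB1def
  set Bpos2 : Finset (Fin n) := Bpos.filter (fun pos => ¬(0 < (pos : ℕ) ∧ g (pred pos) = g pos))
    with hB2def
  have hsplit : Bpos1.card + Bpos2.card = Bpos.card :=
    Finset.card_filter_add_card_filter_not _
  have hB1le : Bpos1.card ≤ SE.card := by
    apply Finset.card_le_card_of_injOn (fun pos => (pred pos, pos))
    · intro pos hpos
      simp only [Finset.mem_coe, hB1def, hBposdef, mem_filter, mem_univ, true_and] at hpos
      obtain ⟨hev, hz, heq⟩ := hpos
      simp only [Finset.mem_coe, hSEdef, mem_filter, mem_univ, true_and]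
      refine ⟨by show (pos : ℕ) - 1 + 1 = (pos : ℕ); omega, heq, by rwa [heq]⟩
    · intro a _ b _ h
      exact congrArg Prod.snd h
  have hB2le : Bpos2.card ≤ m := by
    rw [← hEvcard]
    apply Finset.card_le_card_of_injOn (fun pos => g pos)
    · intro pos hpos
      simp only [Finset.mem_coe, hB2def, hBposdef, mem_filter, mem_univ, true_and] at hpos
      simp only [Finset.mem_coe, mem_filter, mem_univ, true_and]
      exact hpos.1
    · intro a ha b hb hab
      simp only [hB2def, hBposdef, coe_filter, Set.mem_setOf_eq] at ha hb
      by_contra hne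
      have hne' : (a : ℕ) ≠ (b : ℕ) := fun h => hne (Fin.ext h)
      rcases Nat.lt_or_ge (a : ℕ) (b : ℕ) with hlt | hge
      · have hz : 0 < (b : ℕ) := by omega
        have hneq : g (pred b) ≠ g b := fun h => hb.2 ⟨hz, h⟩
        have h1 : a ≤ pred b := Fin.le_def.mpr (by show (a:ℕ) ≤ (b:ℕ) - 1; omega)
        have h2 : pred b ≤ b := Fin.le_def.mpr (by show (b:ℕ) - 1 ≤ (b:ℕ); omega)
        have : g a ≤ g (pred b) := hg h1
        have hlt2 : g (pred b) < g b := lt_of_le_of_ne (hg h2) hneq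
        have hx : g a < g b := lt_of_le_of_lt this hlt2
        have hab2 : g a = g b := hab
        rw [hab2] at hx
        exact absurd hx (lt_irrefl _)
      · have hlt0 : (b : ℕ) < (a : ℕ) := by omega
        have hz : 0 < (a : ℕ) := by omega
        have hneq : g (pred a) ≠ g a := fun h => ha.2 ⟨hz, h⟩
        have h1 : b ≤ pred a := Fin.le_def.mpr (by show (b:ℕ) ≤ (a:ℕ) - 1; omega)
        have h2 : pred a ≤ a := Fin.le_def.mpr (by show (a:ℕ) - 1 ≤ (a:ℕ); omega)
        have : g b ≤ g (pred a) := hg h1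
        have hlt2 : g (pred a) < g a := lt_of_le_of_ne (hg h2) hneq
        have hx : g b < g a := lt_of_le_of_lt this hlt2
        have hab2 : g a = g b := hab
        rw [hab2] at hx
        exact absurd hx (lt_irrefl _)
  -- conclude
  rw [hdes, hBcard]
  have h1 : D.card + 1 ≤ Bpos.card + 2 * m := by omega
  have h2 : Bpos.card ≤ D.card + m := by
    have := Finset.card_le_card hSED
    omega
  rw [abs_le]
  constructor <;> [skip; skip] <;> omega

/-- For `n ≥ 1`, `m ≥ 1`, and a probability vector `(p_1,…,p_{2m})`,
perform a biased `m`-shelf shuffle of `n` cards where each card independently goes into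
pile `k` with probability `p_k`. Then there exists, on the same probability space, a
random variable `B_{n,m}` with the `Binomial(n, Σ_{k=1}^m p_{2k})` distribution such that
`|d_{n,m} − B_{n,m}| ≤ 4m − 1` almost surely. -/
theorem biased_descents_binomial_coupling (n m : ℕ) (hn : 1 ≤ n) (hm : 1 ≤ m)
    (p : Fin (2*m) → ℝ) (hp : ∀ k, 0 ≤ p k) (hsum : ∑ k, p k = 1) :
    ∃ B : (Fin n → Fin (2*m)) → ℕ,
      (∀ k : ℕ, (biasedWord m n p) {w | B w = k}
          = (n.choose k : ENNReal) * ENNReal.ofReal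
              ((∑ j ∈ Finset.univ.filter (fun j : Fin (2*m) => Even ((j : ℕ) + 1)), p j)^k
                * (1 - ∑ j ∈ Finset.univ.filter
                    (fun j : Fin (2*m) => Even ((j : ℕ) + 1)), p j)^(n - k))) ∧
      (∀ᵐ w ∂(biasedWord m n p),
        |(shelfDes m n w : ℤ) - (B w : ℤ)| ≤ 4 * (m : ℤ) - 1) := by
  classical
  refine ⟨fun w => (Finset.univ.filter (fun i : Fin n => Even (Xval w i))).card, ?_, ?_⟩
  · intro k
    exact biased_binomial n m k p hp hsum
  · exact MeasureTheory.ae_of_all _ (fun w => des_bound n m hm w)
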